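/- Let n ≥ 5 be odd and let s be the largest natural number t ≥ 1 such that (t−1)·(n−2) + 2 < (t+1)·(n−t−2) (such t exists since for t = 1 one has 2 < 2·(n−3)). Then at least one of the two numbers (s−1)·(n−2) + 1 and (s−1)·(n−2) + 2 is not equal to f(G) for any simple graph G on n vertices. -/

import Mathlib

open Finset

open Classical in
/-- A triple of distinct vertices is *frustrated* if it induces an odd number of edges. -/
noncomputable def frustrated {V : Type*} (G : SimpleGraph V) (u v w : V) : Prop :=
  Odd ((if G.Adj u v then 1 else 0) + (if G.Adj u w then 1 else 0) +
       (if G.Adj v w then 1 else 0) : ℕ)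

/-- The number of frustrated triangles of `G`: the number of 3-element vertex subsets
inducing an odd number of edges. -/
noncomputable def fCount {V : Type*} [Fintype V] [DecidableEq V] (G : SimpleGraph V) : ℕ := by
  classical
  exact ((Finset.univ.powersetCard 3).filter
    (fun s : Finset V => ∃ u v w : V, u ≠ v ∧ u ≠ w ∧ v ≠ w ∧ s = {u, v, w} ∧
      frustrated G u v w)).card

namespace FrusAux

open Classical

/-- classical filter: a fixed-instance wrapper around `Finset.filter` -/
noncomputable def cf {α : Type*} (P : α → Prop) (s : Finset α) : Finset α :=
  @Finset.filter α P (fun a => Classical.propDecidable (P a)) s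

lemma mem_cf {α : Type*} {P : α → Prop} {s : Finset α} {a : α} :
    a ∈ cf P s ↔ a ∈ s ∧ P a := by
  unfold cf
  exact @Finset.mem_filter α P (fun a => Classical.propDecidable (P a)) s a

lemma card_cf {α : Type*} (P : α → Prop) [inst : DecidablePred P] (s : Finset α) :
    (cf P s).card = ∑ a ∈ s, if P a then 1 else 0 := by
  unfold cf
  rw [Finset.card_filter]
  apply Finset.sum_congr rfl
  intro a _
  by_cases h : P a
  · rw [if_pos h, if_pos h]
  · rw [if_neg h, if_neg h]

lemma cf_subset {α : Type*} (P : α → Prop) (s : Finset α) : cf P s ⊆ s := by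
  intro a ha
  exact (mem_cf.1 ha).1

lemma cf_iff {α : Type*} {s : Finset α} {P Q : α → Prop} (h : ∀ x ∈ s, P x ↔ Q x) :
    cf P s = cf Q s := by
  ext x
  simp only [mem_cf]
  exact ⟨fun ⟨hx, hp⟩ => ⟨hx, (h x hx).1 hp⟩, fun ⟨hx, hq⟩ => ⟨hx, (h x hx).2 hq⟩⟩

lemma cf_split {α : Type*} [DecidableEq α] (s : Finset α) (P Q : α → Prop) :
    (cf P s).card = (cf (fun x => P x ∧ Q x) s).card + (cf (fun x => P x ∧ ¬ Q x) s).card := by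
  have h : cf P s = (cf (fun x => P x ∧ Q x) s) ∪ (cf (fun x => P x ∧ ¬ Q x) s) := by
    ext x
    simp only [mem_cf, Finset.mem_union]
    by_cases hq : Q x <;> tauto
  rw [h, Finset.card_union_of_disjoint]
  rw [Finset.disjoint_left]
  intro x hx hx'
  rw [mem_cf] at hx hx'
  tauto

variable {n : ℕ}

/-- all 2-element subsets -/
noncomputable abbrev P2 (n : ℕ) : Finset (Finset (Fin n)) := Finset.univ.powersetCard 2

/-- all 3-element subsets -/
noncomputable abbrev T3 (n : ℕ) : Finset (Finset (Fin n)) := Finset.univ.powersetCard 3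

lemma mem_P2 {p : Finset (Fin n)} : p ∈ P2 n ↔ p.card = 2 := by
  simp [Finset.mem_powersetCard_univ]

lemma mem_T3 {s : Finset (Fin n)} : s ∈ T3 n ↔ s.card = 3 := by
  simp [Finset.mem_powersetCard_univ]

/-- a 2-set is an edge -/
def adjP (G : SimpleGraph (Fin n)) (p : Finset (Fin n)) : Prop :=
  ∃ a b : Fin n, p = {a, b} ∧ G.Adj a b

/-- number of edges -/
noncomputable def mE (G : SimpleGraph (Fin n)) : ℕ := (cf (adjP G) (P2 n)).card

/-- number of edges inside a set -/
noncomputable def wIn (G : SimpleGraph (Fin n)) (s : Finset (Fin n)) : ℕ :=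
  (cf (fun p => p ⊆ s ∧ adjP G p) (P2 n)).card

lemma pair_eq {α : Type*} [DecidableEq α] {a b c d : α} (h : ({a,b} : Finset α) = {c,d}) :
    (a = c ∧ b = d) ∨ (a = d ∧ b = c) := by
  have ha : a ∈ ({c,d} : Finset α) := by rw [← h]; simp
  have hb : b ∈ ({c,d} : Finset α) := by rw [← h]; simp
  have hc : c ∈ ({a,b} : Finset α) := by rw [h]; simp
  have hd : d ∈ ({a,b} : Finset α) := by rw [h]; simp
  simp only [Finset.mem_insert, Finset.mem_singleton] at ha hb hc hd
  tauto

lemma adjP_pair {G : SimpleGraph (Fin n)} {a b : Fin n} (h : G.Adj a b) :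
    adjP G {a, b} := ⟨a, b, rfl, h⟩

lemma adjP_pair_iff {G : SimpleGraph (Fin n)} {a b : Fin n} :
    adjP G {a, b} ↔ G.Adj a b := by
  constructor
  · rintro ⟨c, d, hcd, h⟩
    rcases pair_eq hcd with ⟨rfl, rfl⟩ | ⟨rfl, rfl⟩
    · exact h
    · exact h.symm
  · exact adjP_pair

lemma card_cf_P2_eq {A B : Finset (Fin n)} (hd : Disjoint A B) (P : Finset (Fin n) → Prop)
    (hP : ∀ p ∈ P2 n, (P p ↔ ∃ a ∈ A, ∃ b ∈ B, p = {a, b})) :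
    (cf P (P2 n)).card = A.card * B.card := by
  classical
  have hset : cf P (P2 n) = (A ×ˢ B).image (fun q => ({q.1, q.2} : Finset (Fin n))) := by
    ext p
    simp only [mem_cf, Finset.mem_image, Finset.mem_product]
    constructor
    · rintro ⟨hp2, hPp⟩
      obtain ⟨a, ha, b, hb, rfl⟩ := (hP p hp2).1 hPp
      exact ⟨(a, b), ⟨ha, hb⟩, rfl⟩
    · rintro ⟨⟨a, b⟩, ⟨ha, hb⟩, rfl⟩
      have hab : a ≠ b := by
        rintro rfl
        exact (Finset.disjoint_left.1 hd ha) hb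
      have hp2 : ({a, b} : Finset (Fin n)) ∈ P2 n := by
        rw [mem_P2, Finset.card_insert_of_notMem (by simp [hab]), Finset.card_singleton]
      exact ⟨hp2, (hP _ hp2).2 ⟨a, ha, b, hb, rfl⟩⟩
  rw [hset, Finset.card_image_of_injOn, Finset.card_product]
  rintro ⟨a, b⟩ hab ⟨c, d⟩ hcd h
  simp only [Finset.mem_coe, Finset.mem_product] at hab hcd
  simp only at h
  rcases pair_eq h with ⟨h1, h2⟩ | ⟨h1, h2⟩
  · simp [Prod.ext_iff, h1, h2]
  · exact absurd (h1 ▸ hab.1 : d ∈ A) (Finset.disjoint_left.1 hd.symm hcd.2)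

lemma card_T3_supsets {p : Finset (Fin n)} (hp : p.card = 2) :
    (cf (fun s => p ⊆ s) (T3 n)).card = n - 2 := by
  classical
  have hset : cf (fun s => p ⊆ s) (T3 n)
      = (Finset.univ \ p).image (fun c => insert c p) := by
    ext s
    simp only [mem_cf, Finset.mem_image, Finset.mem_sdiff, Finset.mem_univ, true_and]
    constructor
    · rintro ⟨h3, hps⟩
      rw [mem_T3] at h3
      have : (s \ p).Nonempty := by
        rw [← Finset.card_pos, Finset.card_sdiff_of_subset hps, h3, hp]; norm_num
      obtain ⟨c, hc⟩ := this
      rw [Finset.mem_sdiff] at hc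
      refine ⟨c, hc.2, ?_⟩
      apply Finset.eq_of_subset_of_card_le
      · exact Finset.insert_subset hc.1 hps
      · rw [h3, Finset.card_insert_of_notMem hc.2, hp]
    · rintro ⟨c, hc, rfl⟩
      refine ⟨?_, Finset.subset_insert _ _⟩
      rw [mem_T3, Finset.card_insert_of_notMem hc, hp]
  rw [hset, Finset.card_image_of_injOn, Finset.card_sdiff_of_subset (Finset.subset_univ p),
    Finset.card_univ, Fintype.card_fin, hp]
  intro c hc c' hc' h
  simp only [Finset.coe_sdiff, Set.mem_diff, Finset.mem_coe, Finset.coe_univ, Set.mem_univ,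
    true_and] at hc hc'
  simp only at h
  have : c ∈ insert c' p := h ▸ Finset.mem_insert_self c p
  rcases Finset.mem_insert.1 this with h' | h'
  · exact h'
  · exact absurd h' hc

lemma card_T3_mem (v : Fin n) (Q : Finset (Fin n) → Prop) :
    (cf (fun s => v ∈ s ∧ Q s) (T3 n)).card
      = (cf (fun p => v ∉ p ∧ Q (insert v p)) (P2 n)).card := by
  classical
  have hset : cf (fun s => v ∈ s ∧ Q s) (T3 n)
      = (cf (fun p => v ∉ p ∧ Q (insert v p)) (P2 n)).image (fun p => insert v p) := by
    ext s
    simp only [mem_cf, Finset.mem_image]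
    constructor
    · rintro ⟨h3, hvs, hQ⟩
      rw [mem_T3] at h3
      refine ⟨s.erase v, ⟨?_, Finset.notMem_erase _ _, ?_⟩, Finset.insert_erase hvs⟩
      · rw [mem_P2, Finset.card_erase_of_mem hvs, h3]
      · rw [Finset.insert_erase hvs]; exact hQ
    · rintro ⟨p, ⟨hp2, hvp, hQ⟩, rfl⟩
      rw [mem_P2] at hp2
      exact ⟨by rw [mem_T3, Finset.card_insert_of_notMem hvp, hp2],
        Finset.mem_insert_self _ _, hQ⟩
  rw [hset, Finset.card_image_of_injOn]
  intro p hp p' hp' h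
  simp only [Finset.mem_coe, mem_cf] at hp hp'
  simp only at h
  have := congrArg (fun t => Finset.erase t v) h
  simpa [Finset.erase_insert hp.2.1, Finset.erase_insert hp'.2.1] using this

lemma subsetpairs_triple {u v w : Fin n} (huv : u ≠ v) (huw : u ≠ w) (hvw : v ≠ w) :
    cf (fun p => p ⊆ ({u, v, w} : Finset (Fin n))) (P2 n)
      = ({({u,v} : Finset (Fin n)), {u,w}, {v,w}} : Finset (Finset (Fin n))) := by
  classical
  ext p
  simp only [mem_cf, Finset.mem_insert, Finset.mem_singleton]
  constructor
  · rintro ⟨hp2, hsub⟩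
    rw [mem_P2, Finset.card_eq_two] at hp2
    obtain ⟨a, b, hab, rfl⟩ := hp2
    have ha := hsub (Finset.mem_insert_self a {b})
    have hb := hsub (Finset.mem_insert_of_mem (Finset.mem_singleton_self b))
    simp only [Finset.mem_insert, Finset.mem_singleton] at ha hb
    rcases ha with rfl | rfl | rfl <;> rcases hb with rfl | rfl | rfl <;>
      first
        | exact absurd rfl hab
        | simp [Finset.pair_comm]
  · intro h
    rcases h with rfl | rfl | rfl <;>
      refine ⟨?_, ?_⟩ <;>
      simp_all [mem_P2, Finset.card_insert_of_notMem, Finset.insert_subset_iff,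
        Finset.subset_iff]

lemma wIn_triple (G : SimpleGraph (Fin n)) {u v w : Fin n}
    (huv : u ≠ v) (huw : u ≠ w) (hvw : v ≠ w) :
    wIn G {u, v, w} = (if G.Adj u v then 1 else 0) + (if G.Adj u w then 1 else 0) +
      (if G.Adj v w then 1 else 0) := by
  classical
  have h1 : ({u,v} : Finset (Fin n)) ∉ ({({u,w} : Finset (Fin n)), {v,w}} : Finset (Finset (Fin n))) := by
    simp only [Finset.mem_insert, Finset.mem_singleton]
    push_neg
    constructor <;> intro he <;> rcases pair_eq he with ⟨ha, hb⟩ | ⟨ha, hb⟩ <;> simp_all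
  have h2 : ({u,w} : Finset (Fin n)) ∉ ({({v,w} : Finset (Fin n))} : Finset (Finset (Fin n))) := by
    simp only [Finset.mem_singleton]
    intro he
    rcases pair_eq he with ⟨ha, hb⟩ | ⟨ha, hb⟩ <;> simp_all
  have hw : wIn G {u, v, w}
      = (cf (adjP G) ({({u,v} : Finset (Fin n)), {u,w}, {v,w}} : Finset (Finset (Fin n)))).card := by
    unfold wIn
    congr 1
    rw [← subsetpairs_triple huv huw hvw]
    ext p
    simp only [mem_cf]
    tauto
  rw [hw, card_cf, Finset.sum_insert h1, Finset.sum_insert h2, Finset.sum_singleton]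
  by_cases g1 : G.Adj u v <;> by_cases g2 : G.Adj u w <;> by_cases g3 : G.Adj v w <;>
    simp [adjP_pair_iff, g1, g2, g3]

open Classical in
lemma frustrated_iff_odd (G : SimpleGraph (Fin n)) {u v w : Fin n}
    (huv : u ≠ v) (huw : u ≠ w) (hvw : v ≠ w) :
    frustrated G u v w ↔ Odd (wIn G {u, v, w}) := by
  by_cases g1 : G.Adj u v <;> by_cases g2 : G.Adj u w <;> by_cases g3 : G.Adj v w <;>
    simp [frustrated, wIn_triple G huv huw hvw, g1, g2, g3]

lemma fCount_eq (G : SimpleGraph (Fin n)) :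
    fCount G = (cf (fun s => Odd (wIn G s)) (T3 n)).card := by
  classical
  unfold fCount
  refine Eq.trans (by convert rfl) ((show ((Finset.univ.powersetCard 3 : Finset (Finset (Fin n))).filter
    (fun s : Finset (Fin n) => ∃ u v w : Fin n, u ≠ v ∧ u ≠ w ∧ v ≠ w ∧ s = {u, v, w} ∧
      frustrated G u v w)).card = (cf (fun s : Finset (Fin n) => ∃ u v w : Fin n,
        u ≠ v ∧ u ≠ w ∧ v ≠ w ∧ s = {u, v, w} ∧ frustrated G u v w)
        (Finset.univ.powersetCard 3)).card from by
    congr 1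
    ext s
    rw [mem_cf, Finset.mem_filter]).trans ?_)
  congr 1
  apply cf_iff
  intro s hs
  rw [mem_T3] at hs
  constructor
  · rintro ⟨u, v, w, huv, huw, hvw, rfl, hfr⟩
    exact (frustrated_iff_odd G huv huw hvw).1 hfr
  · intro hodd
    obtain ⟨u, v, w, huv, huw, hvw, rfl⟩ := Finset.card_eq_three.1 hs
    exact ⟨u, v, w, huv, huw, hvw, rfl, (frustrated_iff_odd G huv huw hvw).2 hodd⟩

lemma cf_cf {α : Type*} (P Q : α → Prop) (s : Finset α) :
    cf P (cf Q s) = cf (fun x => Q x ∧ P x) s := by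
  ext x
  simp only [mem_cf]
  tauto

lemma sum_wIn (G : SimpleGraph (Fin n)) :
    ∑ s ∈ T3 n, wIn G s = mE G * (n - 2) := by
  classical
  have hw : ∀ s, wIn G s = ∑ p ∈ cf (adjP G) (P2 n), (if p ⊆ s then 1 else 0) := by
    intro s
    rw [← card_cf, cf_cf]
    unfold wIn
    congr 1
    apply cf_iff
    intro p _
    exact and_comm
  calc ∑ s ∈ T3 n, wIn G s
      = ∑ s ∈ T3 n, ∑ p ∈ cf (adjP G) (P2 n), (if p ⊆ s then 1 else 0) :=
        Finset.sum_congr rfl fun s _ => hw s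
    _ = ∑ p ∈ cf (adjP G) (P2 n), ∑ s ∈ T3 n, (if p ⊆ s then 1 else 0) :=
        Finset.sum_comm
    _ = ∑ p ∈ cf (adjP G) (P2 n), (n - 2) := by
        apply Finset.sum_congr rfl
        intro p hp
        rw [← card_cf]
        exact card_T3_supsets (mem_P2.1 (mem_cf.1 hp).1)
    _ = mE G * (n - 2) := by rw [Finset.sum_const, smul_eq_mul]; rfl

lemma wIn_le_three (G : SimpleGraph (Fin n)) {s : Finset (Fin n)} (hs : s ∈ T3 n) :
    wIn G s ≤ 3 := by
  obtain ⟨u, v, w, huv, huw, hvw, rfl⟩ := Finset.card_eq_three.1 (mem_T3.1 hs)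
  rw [wIn_triple G huv huw hvw]
  split_ifs <;> omega

lemma fCount_le (G : SimpleGraph (Fin n)) : fCount G ≤ mE G * (n - 2) := by
  classical
  rw [fCount_eq, ← sum_wIn]
  calc (cf (fun s => Odd (wIn G s)) (T3 n)).card
      = ∑ s ∈ cf (fun s => Odd (wIn G s)) (T3 n), 1 := by
        rw [Finset.sum_const, smul_eq_mul, mul_one]
    _ ≤ ∑ s ∈ cf (fun s => Odd (wIn G s)) (T3 n), wIn G s := by
        apply Finset.sum_le_sum
        intro s hs
        have h := (mem_cf.1 hs).2
        rcases h with ⟨k, hk⟩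
        omega
    _ ≤ ∑ s ∈ T3 n, wIn G s := Finset.sum_le_sum_of_subset (cf_subset _ _)

lemma parity (G : SimpleGraph (Fin n)) :
    fCount G % 2 = (mE G * (n - 2)) % 2 := by
  classical
  rw [fCount_eq, ← sum_wIn]
  have h1 : (cf (fun s => Odd (wIn G s)) (T3 n)).card
      = ∑ s ∈ T3 n, (wIn G s % 2) := by
    rw [card_cf]
    apply Finset.sum_congr rfl
    intro s _
    by_cases h : Odd (wIn G s)
    · rw [if_pos h, Nat.odd_iff.1 h]
    · rw [if_neg h]
      rw [Nat.odd_iff] at h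
      omega
  have h2 : (∑ s ∈ T3 n, wIn G s) % 2 = (∑ s ∈ T3 n, wIn G s % 2) % 2 :=
    Finset.sum_nat_mod _ _ _
  rw [h1, h2]

lemma card_two_le_choose (G : SimpleGraph (Fin n)) :
    (cf (fun s => 2 ≤ wIn G s) (T3 n)).card ≤ (mE G).choose 2 := by
  classical
  have hchoose : ((cf (adjP G) (P2 n)).powersetCard 2).card = (mE G).choose 2 := by
    rw [Finset.card_powersetCard]; rfl
  rw [← hchoose]
  set f : Finset (Fin n) → Finset (Finset (Fin n)) := fun s =>
    if h : 2 ≤ (cf (fun p => p ⊆ s ∧ adjP G p) (P2 n)).card then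
      (Finset.exists_subset_card_eq h).choose else ∅ with hf
  have hspec : ∀ s, 2 ≤ wIn G s →
      f s ⊆ cf (fun p => p ⊆ s ∧ adjP G p) (P2 n) ∧ (f s).card = 2 := by
    intro s hs
    have hs' : 2 ≤ (cf (fun p => p ⊆ s ∧ adjP G p) (P2 n)).card := hs
    rw [hf]
    simp only [dif_pos hs']
    exact ⟨(Finset.exists_subset_card_eq hs').choose_spec.1,
      (Finset.exists_subset_card_eq hs').choose_spec.2⟩
  apply Finset.card_le_card_of_injOn f
  · intro s hs
    rw [Finset.mem_coe, mem_cf] at hs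
    obtain ⟨hsub, hcard⟩ := hspec s hs.2
    rw [Finset.mem_coe, Finset.mem_powersetCard]
    refine ⟨hsub.trans ?_, hcard⟩
    intro p hp
    rw [mem_cf] at hp ⊢
    exact ⟨hp.1, hp.2.2⟩
  · intro s₁ hs₁ s₂ hs₂ heq
    simp only [Finset.mem_coe, mem_cf] at hs₁ hs₂
    obtain ⟨hsub₁, hcard₁⟩ := hspec s₁ hs₁.2
    obtain ⟨hsub₂, hcard₂⟩ := hspec s₂ hs₂.2
    rw [heq] at hsub₁ hcard₁
    obtain ⟨p₁, p₂, hne, hP⟩ := Finset.card_eq_two.1 hcard₁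
    rw [hP] at hsub₁ hsub₂
    have h₁ := hsub₁ (Finset.mem_insert_self p₁ {p₂})
    have h₂ := hsub₁ (Finset.mem_insert_of_mem (Finset.mem_singleton_self p₂))
    have h₁' := hsub₂ (Finset.mem_insert_self p₁ {p₂})
    have h₂' := hsub₂ (Finset.mem_insert_of_mem (Finset.mem_singleton_self p₂))
    rw [mem_cf, mem_P2] at h₁ h₂ h₁' h₂'
    have hu3 : 3 ≤ (p₁ ∪ p₂).card := by
      by_contra hlt
      push_neg at hlt
      have e₁ : p₁ = p₁ ∪ p₂ := Finset.eq_of_subset_of_card_le Finset.subset_union_left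
        (by omega)
      have e₂ : p₂ = p₁ ∪ p₂ := Finset.eq_of_subset_of_card_le Finset.subset_union_right
        (by omega)
      exact hne (e₁.trans e₂.symm)
    have hc₁ : s₁.card = 3 := mem_T3.1 hs₁.1
    have hc₂ : s₂.card = 3 := mem_T3.1 hs₂.1
    have e₁ : p₁ ∪ p₂ = s₁ := Finset.eq_of_subset_of_card_le
      (Finset.union_subset h₁.2.1 h₂.2.1) (by omega)
    have e₂ : p₁ ∪ p₂ = s₂ := Finset.eq_of_subset_of_card_le
      (Finset.union_subset h₁'.2.1 h₂'.2.1) (by omega)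
    exact e₁.symm.trans e₂

lemma lower (G : SimpleGraph (Fin n)) :
    mE G * (n - 2) ≤ fCount G + mE G * (mE G - 1) := by
  classical
  have key : mE G * (n - 2) ≤ fCount G + 2 * (cf (fun s => 2 ≤ wIn G s) (T3 n)).card := by
    rw [fCount_eq, ← sum_wIn, card_cf, card_cf, Finset.mul_sum]
    rw [← Finset.sum_add_distrib]
    apply Finset.sum_le_sum
    intro s hs
    have h3 := wIn_le_three G hs
    have ho : (if Odd (wIn G s) then (1:ℕ) else 0) = wIn G s % 2 := by
      by_cases h : Odd (wIn G s)
      · rw [if_pos h, Nat.odd_iff.1 h]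
      · rw [if_neg h]; rw [Nat.odd_iff] at h; omega
    rw [ho]
    by_cases h2 : 2 ≤ wIn G s
    · rw [if_pos h2]; omega
    · rw [if_neg h2]; omega
  have h2 : 2 * (cf (fun s => 2 ≤ wIn G s) (T3 n)).card ≤ mE G * (mE G - 1) := by
    have := card_two_le_choose G
    have hch : 2 * (mE G).choose 2 ≤ mE G * (mE G - 1) := by
      rw [Nat.choose_two_right, mul_comm]
      exact Nat.div_mul_le_self _ _
    omega
  omega

/-- Switching a graph along a vertex subset `S`: adjacency is flipped across the cut. -/
def switch (G : SimpleGraph (Fin n)) (S : Finset (Fin n)) : SimpleGraph (Fin n) where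
  Adj u v := u ≠ v ∧ (G.Adj u v ↔ ((u ∈ S) ↔ (v ∈ S)))
  symm := by
    constructor
    rintro u v ⟨h1, h2⟩
    refine ⟨h1.symm, ?_⟩
    rw [G.adj_comm]
    tauto
  loopless := ⟨by rintro v ⟨h, _⟩; exact h rfl⟩

lemma switch_adj {G : SimpleGraph (Fin n)} {S : Finset (Fin n)} {a b : Fin n} :
    (switch G S).Adj a b ↔ a ≠ b ∧ (G.Adj a b ↔ ((a ∈ S) ↔ (b ∈ S))) := Iff.rfl

lemma switch_switch (G : SimpleGraph (Fin n)) (S T : Finset (Fin n)) :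
    switch (switch G S) T = switch G (symmDiff S T) := by
  ext a b
  simp only [switch_adj, Finset.mem_symmDiff]
  constructor
  · rintro ⟨h1, h2⟩
    exact ⟨h1, by tauto⟩
  · rintro ⟨h1, h2⟩
    exact ⟨h1, by tauto⟩

lemma fCount_switch (G : SimpleGraph (Fin n)) (S : Finset (Fin n)) :
    fCount (switch G S) = fCount G := by
  classical
  rw [fCount_eq, fCount_eq]
  congr 1
  apply cf_iff
  intro s hs
  obtain ⟨u, v, w, huv, huw, hvw, rfl⟩ := Finset.card_eq_three.1 (mem_T3.1 hs)
  rw [wIn_triple (switch G S) huv huw hvw, wIn_triple G huv huw hvw]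
  by_cases g1 : G.Adj u v <;> by_cases g2 : G.Adj u w <;> by_cases g3 : G.Adj v w <;>
    by_cases m1 : u ∈ S <;> by_cases m2 : v ∈ S <;> by_cases m3 : w ∈ S <;>
    simp [switch_adj, g1, g2, g3, m1, m2, m3, huv, huw, hvw, Nat.odd_iff]

/-- a 2-set crosses the cut given by `S` -/
def crossP (S : Finset (Fin n)) (p : Finset (Fin n)) : Prop :=
  ∃ a b : Fin n, p = {a, b} ∧ a ∈ S ∧ b ∉ S

lemma crossP_pair {S : Finset (Fin n)} {a b : Fin n} :
    crossP S {a, b} ↔ ((a ∈ S ∧ b ∉ S) ∨ (b ∈ S ∧ a ∉ S)) := by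
  constructor
  · rintro ⟨c, d, hcd, hc, hd⟩
    rcases pair_eq hcd with ⟨rfl, rfl⟩ | ⟨rfl, rfl⟩ <;> tauto
  · rintro (⟨hc, hd⟩ | ⟨hc, hd⟩)
    · exact ⟨a, b, rfl, hc, hd⟩
    · exact ⟨b, a, Finset.pair_comm a b, hc, hd⟩

lemma cs_card (S : Finset (Fin n)) :
    (cf (crossP S) (P2 n)).card = S.card * (n - S.card) := by
  classical
  have hdisj : Disjoint S (Finset.univ \ S) := Finset.disjoint_sdiff
  have h := card_cf_P2_eq (A := S) (B := Finset.univ \ S) hdisj (crossP S) ?_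
  · rw [h, Finset.card_sdiff_of_subset (Finset.subset_univ S), Finset.card_univ, Fintype.card_fin]
  · intro p _
    constructor
    · rintro ⟨a, b, rfl, ha, hb⟩
      exact ⟨a, ha, b, by simp [hb], rfl⟩
    · rintro ⟨a, ha, b, hb, rfl⟩
      simp only [Finset.mem_sdiff] at hb
      exact ⟨a, b, rfl, ha, hb.2⟩

lemma switch_mE (G : SimpleGraph (Fin n)) (S : Finset (Fin n)) :
    mE (switch G S) + 2 * (cf (fun p => adjP G p ∧ crossP S p) (P2 n)).card
      = mE G + S.card * (n - S.card) := by
  classical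
  have hsw : ∀ p ∈ P2 n, adjP (switch G S) p ↔
      ((adjP G p ∧ ¬ crossP S p) ∨ (¬ adjP G p ∧ crossP S p)) := by
    intro p hp
    obtain ⟨a, b, hab, rfl⟩ := Finset.card_eq_two.1 (mem_P2.1 hp)
    rw [adjP_pair_iff, switch_adj, adjP_pair_iff, crossP_pair]
    constructor
    · rintro ⟨-, h⟩; tauto
    · intro h; exact ⟨hab, by tauto⟩
  have e1 : mE (switch G S)
      = (cf (fun p => adjP G p ∧ ¬ crossP S p) (P2 n)).card
        + (cf (fun p => ¬ adjP G p ∧ crossP S p) (P2 n)).card := by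
    unfold mE
    rw [cf_iff hsw]
    have h : cf (fun p => (adjP G p ∧ ¬ crossP S p) ∨ (¬ adjP G p ∧ crossP S p)) (P2 n)
        = cf (fun p => adjP G p ∧ ¬ crossP S p) (P2 n)
          ∪ cf (fun p => ¬ adjP G p ∧ crossP S p) (P2 n) := by
      ext p
      simp only [mem_cf, Finset.mem_union]
      tauto
    rw [h, Finset.card_union_of_disjoint]
    rw [Finset.disjoint_left]
    intro p hp hp'
    rw [mem_cf] at hp hp'
    tauto
  have e2 : mE G = (cf (fun p => adjP G p ∧ crossP S p) (P2 n)).card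
      + (cf (fun p => adjP G p ∧ ¬ crossP S p) (P2 n)).card :=
    cf_split (P2 n) (adjP G) (crossP S)
  have e3 : (cf (crossP S) (P2 n)).card
      = (cf (fun p => crossP S p ∧ adjP G p) (P2 n)).card
        + (cf (fun p => crossP S p ∧ ¬ adjP G p) (P2 n)).card :=
    cf_split (P2 n) (crossP S) (adjP G)
  have e4 : (cf (fun p => crossP S p ∧ adjP G p) (P2 n)).card
      = (cf (fun p => adjP G p ∧ crossP S p) (P2 n)).card :=
    congrArg Finset.card (cf_iff (fun p _ => and_comm))
  have e5 : (cf (fun p => crossP S p ∧ ¬ adjP G p) (P2 n)).card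
      = (cf (fun p => ¬ adjP G p ∧ crossP S p) (P2 n)).card :=
    congrArg Finset.card (cf_iff (fun p _ => and_comm))
  have e6 := cs_card S
  omega

lemma pair_inter_card {α : Type*} [DecidableEq α] {x y : α} (h : x ≠ y) (N : Finset α) :
    (({x, y} : Finset α) ∩ N).card
      = (if x ∈ N then 1 else 0) + (if y ∈ N then 1 else 0) := by
  by_cases hx : x ∈ N <;> by_cases hy : y ∈ N <;>
    simp [Finset.insert_inter_of_mem, Finset.insert_inter_of_notMem,
      Finset.singleton_inter_of_mem, Finset.singleton_inter_of_notMem, hx, hy,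
      Finset.card_insert_of_notMem, h]

lemma wIn_insert (G : SimpleGraph (Fin n)) {v a b : Fin n}
    (hab : a ≠ b) (hva : v ≠ a) (hvb : v ≠ b) :
    wIn G (insert v ({a, b} : Finset (Fin n)))
      = (({a, b} : Finset (Fin n)) ∩ G.neighborFinset v).card
        + (if G.Adj a b then 1 else 0) := by
  have h1 : insert v ({a, b} : Finset (Fin n)) = {v, a, b} := rfl
  rw [h1, wIn_triple G hva hvb hab, pair_inter_card hab]
  simp [SimpleGraph.mem_neighborFinset]

/-- number of frustrated triples through `v` -/
noncomputable def fv (G : SimpleGraph (Fin n)) (v : Fin n) : ℕ :=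
  (cf (fun p => v ∉ p ∧ Odd (wIn G (insert v p))) (P2 n)).card

lemma three_fCount (G : SimpleGraph (Fin n)) :
    3 * fCount G = ∑ v : Fin n, fv G v := by
  classical
  rw [fCount_eq]
  have h1 : ∀ s ∈ cf (fun s => Odd (wIn G s)) (T3 n), (3 : ℕ)
      = ∑ v : Fin n, (if v ∈ s then 1 else 0) := by
    intro s hs
    rw [← card_cf]
    have h : cf (fun v => v ∈ s) Finset.univ = s := by
      ext x
      simp [mem_cf]
    rw [h, mem_T3.1 (mem_cf.1 hs).1]
  calc 3 * (cf (fun s => Odd (wIn G s)) (T3 n)).card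
      = ∑ s ∈ cf (fun s => Odd (wIn G s)) (T3 n), 3 := by
        rw [Finset.sum_const, smul_eq_mul, mul_comm]
    _ = ∑ s ∈ cf (fun s => Odd (wIn G s)) (T3 n), ∑ v : Fin n,
          (if v ∈ s then 1 else 0) := Finset.sum_congr rfl h1
    _ = ∑ v : Fin n, ∑ s ∈ cf (fun s => Odd (wIn G s)) (T3 n),
          (if v ∈ s then 1 else 0) := Finset.sum_comm
    _ = ∑ v : Fin n, fv G v := by
        apply Finset.sum_congr rfl
        intro v _
        rw [← card_cf, cf_cf]
        have h2 : (cf (fun s => Odd (wIn G s) ∧ v ∈ s) (T3 n)).card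
            = (cf (fun s => v ∈ s ∧ Odd (wIn G s)) (T3 n)).card :=
          congrArg Finset.card (cf_iff (fun s _ => and_comm))
        rw [h2]
        exact card_T3_mem v (fun s => Odd (wIn G s))

lemma fv_ge (G : SimpleGraph (Fin n)) (hmin : ∀ T : Finset (Fin n), mE G ≤ mE (switch G T))
    (v : Fin n) : mE G ≤ fv G v := by
  classical
  set Nv := G.neighborFinset v with hNv
  have hvNv : v ∉ Nv := by simp [hNv]
  set K := ((Finset.univ.erase v) \ Nv).card with hK
  have hmemv : ∀ p ∈ P2 n, ((adjP G p ∧ v ∈ p) ↔ ∃ a ∈ ({v} : Finset (Fin n)), ∃ b ∈ Nv,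
      p = {a, b}) := by
    intro p hp
    constructor
    · rintro ⟨hadj, hvp⟩
      obtain ⟨a, b, hab, rfl⟩ := Finset.card_eq_two.1 (mem_P2.1 hp)
      rw [adjP_pair_iff] at hadj
      rcases Finset.mem_insert.1 hvp with rfl | hvb
      · exact ⟨v, Finset.mem_singleton_self v, b,
          by simp [hNv, SimpleGraph.mem_neighborFinset, hadj], rfl⟩
      · rw [Finset.mem_singleton] at hvb
        subst hvb
        exact ⟨v, Finset.mem_singleton_self v, a,
          by simp [hNv, SimpleGraph.mem_neighborFinset, hadj.symm], Finset.pair_comm a v⟩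
    · rintro ⟨a, ha, b, hb, rfl⟩
      rw [Finset.mem_singleton] at ha
      subst ha
      rw [hNv, SimpleGraph.mem_neighborFinset] at hb
      exact ⟨adjP_pair hb, Finset.mem_insert_self _ _⟩
  have hcrossX : ∀ p ∈ P2 n, ¬ v ∈ p → (crossP Nv p ↔ (p ∩ Nv).card = 1) := by
    intro p hp hvp
    obtain ⟨a, b, hab, rfl⟩ := Finset.card_eq_two.1 (mem_P2.1 hp)
    rw [crossP_pair, pair_inter_card hab]
    by_cases ha : a ∈ Nv <;> by_cases hb : b ∈ Nv <;> simp [ha, hb]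
  have hvcross : ∀ p ∈ P2 n, adjP G p → v ∈ p → crossP Nv p := by
    intro p hp hadj hvp
    obtain ⟨a, b, hab, rfl⟩ := Finset.card_eq_two.1 (mem_P2.1 hp)
    rw [adjP_pair_iff] at hadj
    rcases Finset.mem_insert.1 hvp with rfl | hvb
    · exact ⟨b, v, Finset.pair_comm v b,
        by simp [hNv, SimpleGraph.mem_neighborFinset, hadj], hvNv⟩
    · rw [Finset.mem_singleton] at hvb
      subst hvb
      exact ⟨a, v, rfl, by simp [hNv, SimpleGraph.mem_neighborFinset, hadj.symm], hvNv⟩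
  have s1 : mE G = (cf (fun p => adjP G p ∧ v ∈ p) (P2 n)).card
      + (cf (fun p => adjP G p ∧ ¬ v ∈ p) (P2 n)).card :=
    cf_split (P2 n) (adjP G) (fun p => v ∈ p)
  have s2 : (cf (fun p => adjP G p ∧ v ∈ p) (P2 n)).card = Nv.card := by
    have h := card_cf_P2_eq (A := ({v} : Finset (Fin n))) (B := Nv)
      (by simp [Finset.disjoint_singleton_left, hvNv]) (fun p => adjP G p ∧ v ∈ p) hmemv
    rw [h, Finset.card_singleton, one_mul]
  have s3 : (cf (fun p => adjP G p ∧ ¬ v ∈ p) (P2 n)).card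
      = (cf (fun p => (adjP G p ∧ ¬ v ∈ p) ∧ (p ∩ Nv).card = 1) (P2 n)).card
        + (cf (fun p => (adjP G p ∧ ¬ v ∈ p) ∧ ¬ (p ∩ Nv).card = 1) (P2 n)).card :=
    cf_split (P2 n) _ _
  have s4 : (cf (fun p => ¬ v ∈ p ∧ (p ∩ Nv).card = 1) (P2 n)).card = Nv.card * K := by
    have h := card_cf_P2_eq (A := Nv) (B := (Finset.univ.erase v) \ Nv)
      Finset.disjoint_sdiff (fun p => ¬ v ∈ p ∧ (p ∩ Nv).card = 1) ?_
    · exact h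
    intro p hp
    obtain ⟨a, b, hab, rfl⟩ := Finset.card_eq_two.1 (mem_P2.1 hp)
    constructor
    · rintro ⟨hvp, hX⟩
      simp only [Finset.mem_insert, Finset.mem_singleton, not_or] at hvp
      rw [pair_inter_card hab] at hX
      by_cases ha : a ∈ Nv <;> by_cases hb : b ∈ Nv <;> simp [ha, hb] at hX
      · exact ⟨a, ha, b, by simp [Finset.mem_sdiff, Finset.mem_erase, hb, Ne.symm hvp.2], rfl⟩
      · exact ⟨b, hb, a, by simp [Finset.mem_sdiff, Finset.mem_erase, ha, Ne.symm hvp.1],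
          Finset.pair_comm a b⟩
    · rintro ⟨a', ha', b', hb', heq⟩
      rw [Finset.mem_sdiff, Finset.mem_erase] at hb'
      have hva' : v ≠ a' := fun h => hvNv (h ▸ ha')
      have hne : a' ≠ b' := fun h => hb'.2 (h ▸ ha')
      constructor
      · rw [heq]
        simp only [Finset.mem_insert, Finset.mem_singleton, not_or]
        exact ⟨hva', Ne.symm hb'.1.1⟩
      · rw [heq, pair_inter_card hne]
        simp [ha', hb'.2]
  have s5 : (cf (fun p => ¬ v ∈ p ∧ (p ∩ Nv).card = 1) (P2 n)).card
      = (cf (fun p => (¬ v ∈ p ∧ (p ∩ Nv).card = 1) ∧ adjP G p) (P2 n)).card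
        + (cf (fun p => (¬ v ∈ p ∧ (p ∩ Nv).card = 1) ∧ ¬ adjP G p) (P2 n)).card :=
    cf_split (P2 n) _ _
  have s6 : (cf (fun p => (¬ v ∈ p ∧ (p ∩ Nv).card = 1) ∧ adjP G p) (P2 n)).card
      = (cf (fun p => (adjP G p ∧ ¬ v ∈ p) ∧ (p ∩ Nv).card = 1) (P2 n)).card :=
    congrArg Finset.card (cf_iff (fun p _ => by tauto))
  have s8 : mE (switch G Nv)
      + 2 * (cf (fun p => adjP G p ∧ crossP Nv p) (P2 n)).card
      = mE G + Nv.card * (n - Nv.card) := switch_mE G Nv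
  have s9 : mE G ≤ mE (switch G Nv) := hmin Nv
  have s10 : (cf (fun p => adjP G p ∧ crossP Nv p) (P2 n)).card
      = Nv.card + (cf (fun p => (adjP G p ∧ ¬ v ∈ p) ∧ (p ∩ Nv).card = 1) (P2 n)).card := by
    have h0 : (cf (fun p => adjP G p ∧ crossP Nv p) (P2 n)).card
        = (cf (fun p => (adjP G p ∧ crossP Nv p) ∧ v ∈ p) (P2 n)).card
          + (cf (fun p => (adjP G p ∧ crossP Nv p) ∧ ¬ v ∈ p) (P2 n)).card :=
      cf_split (P2 n) _ _
    have h1 : (cf (fun p => (adjP G p ∧ crossP Nv p) ∧ v ∈ p) (P2 n)).card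
        = (cf (fun p => adjP G p ∧ v ∈ p) (P2 n)).card :=
      congrArg Finset.card (cf_iff (fun p hp => by
        constructor
        · rintro ⟨⟨ha, -⟩, hb⟩; exact ⟨ha, hb⟩
        · rintro ⟨ha, hb⟩; exact ⟨⟨ha, hvcross p hp ha hb⟩, hb⟩))
    have h2 : (cf (fun p => (adjP G p ∧ crossP Nv p) ∧ ¬ v ∈ p) (P2 n)).card
        = (cf (fun p => (adjP G p ∧ ¬ v ∈ p) ∧ (p ∩ Nv).card = 1) (P2 n)).card :=
      congrArg Finset.card (cf_iff (fun p hp => by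
        constructor
        · rintro ⟨⟨ha, hcr⟩, hb⟩; exact ⟨⟨ha, hb⟩, (hcrossX p hp hb).1 hcr⟩
        · rintro ⟨⟨ha, hb⟩, hX⟩; exact ⟨⟨ha, (hcrossX p hp hb).2 hX⟩, hb⟩))
    rw [h0, h1, h2, s2]
  have s11 : Nv.card * (n - Nv.card) = Nv.card * K + Nv.card := by
    have h1 : (Finset.univ \ Nv) = insert v ((Finset.univ.erase v) \ Nv) := by
      ext x
      by_cases hxv : x = v <;>
        simp [Finset.mem_sdiff, Finset.mem_insert, Finset.mem_erase, hxv, hvNv]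
    have h2 : (Finset.univ \ Nv).card = K + 1 := by
      rw [h1, Finset.card_insert_of_notMem (by simp [Finset.mem_sdiff])]
    have h3 : (Finset.univ \ Nv).card = n - Nv.card := by
      rw [Finset.card_sdiff_of_subset (Finset.subset_univ Nv), Finset.card_univ, Fintype.card_fin]
    rw [← h3, h2]
    ring
  have s12 : (cf (fun p => (¬ v ∈ p ∧ (p ∩ Nv).card = 1) ∧ ¬ adjP G p) (P2 n)).card
      + (cf (fun p => (adjP G p ∧ ¬ v ∈ p) ∧ ¬ (p ∩ Nv).card = 1) (P2 n)).card
      ≤ fv G v := by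
    have hA : cf (fun p => (¬ v ∈ p ∧ (p ∩ Nv).card = 1) ∧ ¬ adjP G p) (P2 n)
        ⊆ cf (fun p => v ∉ p ∧ Odd (wIn G (insert v p))) (P2 n) := by
      intro p hp
      rw [mem_cf] at hp ⊢
      obtain ⟨hp2, ⟨hvp, hX⟩, hna⟩ := hp
      obtain ⟨a, b, hab, rfl⟩ := Finset.card_eq_two.1 (mem_P2.1 hp2)
      have hvp' := hvp
      simp only [Finset.mem_insert, Finset.mem_singleton, not_or] at hvp'
      refine ⟨hp2, hvp, ?_⟩
      rw [wIn_insert G hab hvp'.1 hvp'.2, hX]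
      rw [adjP_pair_iff] at hna
      simp [hna]
    have hB : cf (fun p => (adjP G p ∧ ¬ v ∈ p) ∧ ¬ (p ∩ Nv).card = 1) (P2 n)
        ⊆ cf (fun p => v ∉ p ∧ Odd (wIn G (insert v p))) (P2 n) := by
      intro p hp
      rw [mem_cf] at hp ⊢
      obtain ⟨hp2, ⟨hadj, hvp⟩, hX⟩ := hp
      obtain ⟨a, b, hab, rfl⟩ := Finset.card_eq_two.1 (mem_P2.1 hp2)
      have hvp' := hvp
      simp only [Finset.mem_insert, Finset.mem_singleton, not_or] at hvp'
      refine ⟨hp2, hvp, ?_⟩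
      rw [wIn_insert G hab hvp'.1 hvp'.2, ← hNv]
      rw [adjP_pair_iff] at hadj
      rw [if_pos hadj]
      have hle : (({a, b} : Finset (Fin n)) ∩ Nv).card ≤ 2 := by
        calc (({a, b} : Finset (Fin n)) ∩ Nv).card ≤ ({a, b} : Finset (Fin n)).card :=
          Finset.card_le_card Finset.inter_subset_left
        _ = 2 := by rw [Finset.card_insert_of_notMem (by simp [hab]), Finset.card_singleton]
      rw [Nat.odd_iff]
      omega
    have hdisj : Disjoint
        (cf (fun p => (¬ v ∈ p ∧ (p ∩ Nv).card = 1) ∧ ¬ adjP G p) (P2 n))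
        (cf (fun p => (adjP G p ∧ ¬ v ∈ p) ∧ ¬ (p ∩ Nv).card = 1) (P2 n)) := by
      rw [Finset.disjoint_left]
      intro p hp hp'
      rw [mem_cf] at hp hp'
      tauto
    calc _ = ((cf (fun p => (¬ v ∈ p ∧ (p ∩ Nv).card = 1) ∧ ¬ adjP G p) (P2 n))
          ∪ (cf (fun p => (adjP G p ∧ ¬ v ∈ p) ∧ ¬ (p ∩ Nv).card = 1) (P2 n))).card :=
          (Finset.card_union_of_disjoint hdisj).symm
      _ ≤ _ := Finset.card_le_card (Finset.union_subset hA hB)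
  omega

lemma n_mul_mE_le (G : SimpleGraph (Fin n))
    (hmin : ∀ T : Finset (Fin n), mE G ≤ mE (switch G T)) :
    n * mE G ≤ 3 * fCount G := by
  rw [three_fCount]
  calc n * mE G = ∑ _v : Fin n, mE G := by
        rw [Finset.sum_const, Finset.card_univ, Fintype.card_fin, smul_eq_mul]
    _ ≤ ∑ v : Fin n, fv G v := Finset.sum_le_sum fun v _ => fv_ge G hmin v

lemma exists_min_rep (G : SimpleGraph (Fin n)) :
    ∃ S₀ : Finset (Fin n), ∀ T : Finset (Fin n), mE (switch G S₀) ≤ mE (switch G T) := by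
  obtain ⟨S₀, -, h⟩ := Finset.exists_min_image (Finset.univ : Finset (Finset (Fin n)))
    (fun S => mE (switch G S)) ⟨∅, Finset.mem_univ ∅⟩
  exact ⟨S₀, fun T => h T (Finset.mem_univ T)⟩

end FrusAux

set_option maxHeartbeats 1000000 in
theorem odd_case_gap_value_not_realisable
    (n : ℕ) (hn : 5 ≤ n) (hno : Odd n) (s : ℕ) (hs1 : 1 ≤ s)
    (hs : ((s : ℤ) - 1) * ((n : ℤ) - 2) + 2 < ((s : ℤ) + 1) * ((n : ℤ) - s - 2))
    (hmax : ∀ t : ℕ, 1 ≤ t →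
      ((t : ℤ) - 1) * ((n : ℤ) - 2) + 2 < ((t : ℤ) + 1) * ((n : ℤ) - t - 2) → t ≤ s) :
    (∀ G : SimpleGraph (Fin n), fCount G ≠ (s - 1) * (n - 2) + 1) ∨
    (∀ G : SimpleGraph (Fin n), fCount G ≠ (s - 1) * (n - 2) + 2) := by
  right
  intro G hF
  classical
  obtain ⟨S₀, hmin⟩ := FrusAux.exists_min_rep G
  set H := FrusAux.switch G S₀ with hH
  have hminH : ∀ T : Finset (Fin n), FrusAux.mE H ≤ FrusAux.mE (FrusAux.switch H T) := by
    intro T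
    rw [hH, FrusAux.switch_switch]
    exact hmin (symmDiff S₀ T)
  have hfH : fCount H = (s - 1) * (n - 2) + 2 := by
    rw [hH, FrusAux.fCount_switch, hF]
  set m := FrusAux.mE H with hm
  have h_le : fCount H ≤ m * (n - 2) := FrusAux.fCount_le H
  have h_low : m * (n - 2) ≤ fCount H + m * (m - 1) := FrusAux.lower H
  have h_par : fCount H % 2 = (m * (n - 2)) % 2 := FrusAux.parity H
  have h_nm : n * m ≤ 3 * fCount H := FrusAux.n_mul_mE_le H hminH
  -- parity bookkeeping
  have hn2 : (n - 2) % 2 = 1 := by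
    rw [Nat.odd_iff] at hno
    omega
  have hmm : (m * (n - 2)) % 2 = m % 2 := by
    conv_lhs => rw [Nat.mul_mod, hn2]
    omega
  have hss : ((s - 1) * (n - 2)) % 2 = (s - 1) % 2 := by
    conv_lhs => rw [Nat.mul_mod, hn2]
    omega
  have hFmod : ((s - 1) * (n - 2) + 2) % 2 = (s - 1) % 2 := by omega
  have hpar2 : (s - 1) % 2 = m % 2 := by
    rw [hfH] at h_par
    omega
  -- the quadratic bound from hs : s^2 + s + 7 ≤ 2n
  have hu : (0 : ℤ) ≤ 2 * (n : ℤ) - (s : ℤ) * (s : ℤ) - (s : ℤ) - 7 := by nlinarith [hs]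
  -- trichotomy
  have htri : m + 1 ≤ s ∨ (s + 1 ≤ m ∧ m + s + 2 ≤ n) ∨ n ≤ m + s + 1 := by omega
  -- casts
  have hcast : ((s : ℤ) - 1) * ((n : ℤ) - 2) + 2 = (((s - 1) * (n - 2) + 2 : ℕ) : ℤ) := by
    push_cast [Nat.cast_sub hs1, Nat.cast_sub (by omega : 2 ≤ n)]
    ring
  rcases htri with hc1 | ⟨hc2a, hc2b⟩ | hc3
  · -- m ≤ s - 1 : fCount too small
    have : m * (n - 2) ≤ (s - 1) * (n - 2) :=
      Nat.mul_le_mul_right _ (by omega)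
    omega
  · -- middle range : fCount too large
    have hZlow : (m : ℤ) * ((n : ℤ) - 2) ≤ (((s : ℤ) - 1) * ((n : ℤ) - 2) + 2) + (m : ℤ) * ((m : ℤ) - 1) := by
      rw [hcast]
      have := h_low
      rw [hfH] at this
      have h2n : (2 : ℕ) ≤ n := by omega
      have hcn : ((n - 2 : ℕ) : ℤ) = (n : ℤ) - 2 := by
        push_cast [Nat.cast_sub h2n]; ring
      have hcm : (1 : ℕ) ≤ m ∨ m = 0 := by omega
      rcases hcm with hm1 | hm0
      · have hcmm : ((m - 1 : ℕ) : ℤ) = (m : ℤ) - 1 := by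
          push_cast [Nat.cast_sub hm1]; ring
        calc (m : ℤ) * ((n : ℤ) - 2) = ((m * (n - 2) : ℕ) : ℤ) := by
              rw [Nat.cast_mul, hcn]
          _ ≤ (((s - 1) * (n - 2) + 2 : ℕ) : ℤ) + ((m * (m - 1) : ℕ) : ℤ) := by
              exact_mod_cast this
          _ = (((s - 1) * (n - 2) + 2 : ℕ) : ℤ) + (m : ℤ) * ((m : ℤ) - 1) := by
              rw [Nat.cast_mul, hcmm]
      · exfalso
        rw [hm0] at hc2a
        omega
    have hsZ : (s : ℤ) + 1 ≤ (m : ℤ) := by exact_mod_cast hc2a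
    have hnZ : (m : ℤ) + (s : ℤ) + 2 ≤ (n : ℤ) := by exact_mod_cast hc2b
    nlinarith [mul_nonneg (by linarith : (0:ℤ) ≤ (m : ℤ) - (s : ℤ) - 1)
      (by linarith : (0:ℤ) ≤ (n : ℤ) - 2 - (s : ℤ) - (m : ℤ)), hs, hZlow]
  · -- large range : fCount must be huge
    have hZnm : (n : ℤ) * (m : ℤ) ≤ 3 * (((s : ℤ) - 1) * ((n : ℤ) - 2) + 2) := by
      rw [hcast]
      have := h_nm
      rw [hfH] at this
      exact_mod_cast this
    have hc3Z : (n : ℤ) ≤ (m : ℤ) + (s : ℤ) + 1 := by exact_mod_cast hc3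
    have hNnn : (0 : ℤ) ≤ (n : ℤ) := by positivity
    have hs5 : (5 : ℤ) ≤ (n : ℤ) := by exact_mod_cast hn
    have hs1Z : (1 : ℤ) ≤ (s : ℤ) := by exact_mod_cast hs1
    -- n * (n - 1 - s) > 3 * ((s-1)(n-2) + 2)
    have hpsi : 3 * (((s : ℤ) - 1) * ((n : ℤ) - 2) + 2) < (n : ℤ) * ((n : ℤ) - 1 - (s : ℤ)) := by
      nlinarith [hu, sq_nonneg (2 * (n : ℤ) - (s : ℤ) * (s : ℤ) - (s : ℤ) - 7),
        mul_nonneg hu (sq_nonneg (2 * (s : ℤ) - 3)),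
        sq_nonneg ((s : ℤ) * ((s : ℤ) - 3)), sq_nonneg (4 * (s : ℤ) - 14)]
    have hmono : (n : ℤ) * ((n : ℤ) - 1 - (s : ℤ)) ≤ (n : ℤ) * (m : ℤ) := by
      apply mul_le_mul_of_nonneg_left _ hNnn
      linarith
    linarith
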